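/- Let K be a field and let I ⊂ K[x,y] be an equigenerated monomial ideal of height 2 with μ(I) = m. Then (a) μ(I^k) ≥ k(m−1) + 1 for all k ≥ 1, and (b) the following are equivalent: (i) μ(I^k) = k(m−1) + 1 for some k ≥ 2; (ii) μ(I^k) = k(m−1) + 1 for all k ≥ 2; (iii) there exist positive integers a and r such that I = (x^a, y^a)^r. -/

import Mathlib

open MvPolynomial

/-- The minimal number of generators of an ideal. -/
noncomputable def mu {R : Type*} [CommRing R] (I : Ideal R) : ℕ :=
  sInf {m : ℕ | ∃ s : Finset R, s.card = m ∧ Ideal.span (s : Set R) = I}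

/-- An equigenerated monomial ideal: generated by monomials all of the same total degree. -/
def IsEquigenMonomialIdeal {K : Type*} [Field K] {n : ℕ}
    (I : Ideal (MvPolynomial (Fin n) K)) : Prop :=
  ∃ (d : ℕ) (S : Set (Fin n →₀ ℕ)), S.Nonempty ∧ (∀ v ∈ S, (∑ i, v i) = d) ∧
    I = Ideal.span ((fun v => monomial v (1 : K)) '' S)

/-- A monomial ideal of `K[x,y]` has height 2 iff it is proper and contains a power of `x`
and a power of `y`. -/
def HasHeightTwo {K : Type*} [Field K] (I : Ideal (MvPolynomial (Fin 2) K)) : Prop :=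
  I ≠ ⊤ ∧ ∃ k l : ℕ, 0 < k ∧ 0 < l ∧
    (X 0 : MvPolynomial (Fin 2) K) ^ k ∈ I ∧ (X 1 : MvPolynomial (Fin 2) K) ^ l ∈ I


open Finset Pointwise
open scoped Classical

section Lemmas

-- sum of members is in nsmul
lemma mem_nsmul_of_forall_mem {A : Finset ℕ} {k : ℕ} (f : ℕ → ℕ)
    (hf : ∀ i < k, f i ∈ A) : (∑ i ∈ range k, f i) ∈ k • A := by
  induction k with
  | zero => simp [zero_nsmul]
  | succ n ih =>
    rw [succ_nsmul, Finset.sum_range_succ]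
    exact Finset.add_mem_add (ih fun i hi => hf i (by omega)) (hf n (by omega))

-- the chain lower bound
lemma nsmul_card_lower (A : Finset ℕ) (hA : A.Nonempty) (k : ℕ) :
    k * (A.card - 1) + 1 ≤ (k • A).card := by
  set m := A.card with hm
  have hm1 : 1 ≤ m := Finset.card_pos.mpr hA
  set a : Fin m ↪o ℕ := A.orderEmbOfFin rfl with ha
  set a' : ℕ → ℕ := fun t => a ⟨t ⊓ (m - 1), by omega⟩ with ha'
  have ha'mem : ∀ t, a' t ∈ A := fun t => A.orderEmbOfFin_mem rfl _
  have ha'mono : Monotone a' := by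
    intro t t' h
    exact a.monotone (by simp [Fin.mk_le_mk]; omega)
  have ha'lt : ∀ {t t'}, t ⊓ (m-1) < t' ⊓ (m-1) → a' t < a' t' := by
    intro t t' h
    exact a.strictMono (by simp [Fin.mk_lt_mk]; omega)
  have hsum : ∀ j, ∑ i ∈ range k, ((j - i * (m-1)) ⊓ (m-1)) = j ⊓ (k * (m-1)) := by
    intro j
    induction k with
    | zero => simp
    | succ n ih =>
      rw [Finset.sum_range_succ, ih]
      have : (n+1) * (m-1) = n * (m-1) + (m-1) := by ring
      rw [this]
      generalize n * (m-1) = c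
      omega
  -- the chain function
  set g : ℕ → ℕ := fun j => ∑ i ∈ range k, a' (j - i * (m - 1)) with hg
  have hgmem : ∀ j, g j ∈ k • A := fun j => mem_nsmul_of_forall_mem _ (fun i _ => ha'mem _)
  have hgmono : ∀ {j j'}, j < j' → j' ≤ k * (m-1) → g j < g j' := by
    intro j j' hlt hle
    have hsle : ∀ i ∈ range k, a' (j - i * (m-1)) ≤ a' (j' - i * (m-1)) :=
      fun i _ => ha'mono (by omega)
    have hex : ∃ i ∈ range k, a' (j - i * (m-1)) < a' (j' - i * (m-1)) := by
      by_contra hc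
      push_neg at hc
      have heq : ∀ i ∈ range k, ((j - i * (m-1)) ⊓ (m-1)) = ((j' - i * (m-1)) ⊓ (m-1)) := by
        intro i hi
        have h1 := hc i hi
        have h2 := hsle i hi
        by_contra hne
        have : (j - i * (m-1)) ⊓ (m-1) < (j' - i * (m-1)) ⊓ (m-1) := by omega
        exact absurd (ha'lt this) (by omega)
      have := Finset.sum_congr rfl heq
      rw [hsum, hsum] at this
      omega
    exact Finset.sum_lt_sum hsle hex
  -- now conclude
  have : (range (k * (m-1) + 1)).image g ⊆ k • A := by
    intro x hx
    simp only [Finset.mem_image] at hx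
    obtain ⟨j, _, rfl⟩ := hx
    exact hgmem j
  have hcard : ((range (k * (m-1) + 1)).image g).card = k * (m-1) + 1 := by
    rw [Finset.card_image_of_injOn, Finset.card_range]
    intro x hx y hy hxy
    simp only [Finset.coe_range, Set.mem_Iio] at hx hy
    by_contra hne
    rcases Nat.lt_or_ge x y with h | h
    · exact absurd (hgmono h (by omega)) (by omega)
    · exact absurd (hgmono (by omega : y < x) (by omega)) (by omega)
  calc k * (m-1) + 1 = ((range (k * (m-1) + 1)).image g).card := hcard.symm
    _ ≤ (k • A).card := Finset.card_le_card this

-- |A + B| ≥ |A| + |B| - 1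
lemma card_add_lower (A B : Finset ℕ) (hA : A.Nonempty) (hB : B.Nonempty) :
    A.card + B.card ≤ (A + B).card + 1 := by
  set X := A.image (fun x => x + B.min' hB) with hX
  set Y := B.image (fun y => A.max' hA + y) with hY
  have hXc : X.card = A.card := Finset.card_image_of_injective _ (add_left_injective _)
  have hYc : Y.card = B.card := Finset.card_image_of_injective _ (add_right_injective _)
  have hsub : X ∪ Y ⊆ A + B := by
    intro z hz
    rcases Finset.mem_union.mp hz with h | h
    · obtain ⟨x, hx, rfl⟩ := Finset.mem_image.mp h
      exact Finset.add_mem_add hx (B.min'_mem hB)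
    · obtain ⟨y, hy, rfl⟩ := Finset.mem_image.mp h
      exact Finset.add_mem_add (A.max'_mem hA) hy
  have hint : X ∩ Y ⊆ {A.max' hA + B.min' hB} := by
    intro z hz
    obtain ⟨hzX, hzY⟩ := Finset.mem_inter.mp hz
    obtain ⟨x, hx, hx'⟩ := Finset.mem_image.mp hzX
    obtain ⟨y, hy, hy'⟩ := Finset.mem_image.mp hzY
    have h1 : x ≤ A.max' hA := A.le_max' x hx
    have h2 : B.min' hB ≤ y := B.min'_le y hy
    simp only [Finset.mem_singleton]
    omega
  have h3 := Finset.card_union_add_card_inter X Y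
  have h4 : (X ∩ Y).card ≤ 1 := le_trans (Finset.card_le_card hint) (by simp)
  have h5 : (X ∪ Y).card ≤ (A + B).card := Finset.card_le_card hsub
  omega

lemma nsmul_nonempty {A : Finset ℕ} (hA : A.Nonempty) (k : ℕ) : (k • A).Nonempty := by
  induction k with
  | zero => simp [zero_nsmul]
  | succ n ih => rw [succ_nsmul]; exact ih.add hA

-- iterated: |kA| ≥ |2A| + (k-2)(m-1)
lemma nsmul_card_ge_two_nsmul (A : Finset ℕ) (hA : A.Nonempty) (k : ℕ) (hk : 2 ≤ k) :
    (2 • A).card + (k - 2) * (A.card - 1) ≤ (k • A).card := by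
  induction k with
  | zero => omega
  | succ n ih =>
    rcases Nat.lt_or_ge n 2 with h | h
    · interval_cases n
      · omega
      · have : (1:ℕ) + 1 = 2 := rfl
        rw [this]
        simp
    · have h1 := ih h
      have h2 := card_add_lower (n • A) A (nsmul_nonempty hA n) hA
      have hs : (n+1) • A = n • A + A := succ_nsmul A n
      rw [hs]
      have hc : 1 ≤ A.card := Finset.card_pos.mpr hA
      have : (n+1) - 2 = (n - 2) + 1 := by omega
      rw [this]
      have hexp : ((n-2)+1) * (A.card - 1) = (n-2)*(A.card-1) + (A.card - 1) := by ring
      rw [hexp]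
      set p := (n-2)*(A.card-1) with hp
      omega

lemma two_nsmul_eq_ap (A : Finset ℕ) (h0 : 0 ∈ A) (hm2 : 2 ≤ A.card)
    (hcard : (2 • A).card = 2 * (A.card - 1) + 1) :
    ∃ δ : ℕ, 1 ≤ δ ∧ A = (range A.card).image (· * δ) := by
  set m := A.card with hm
  set a : Fin m ↪o ℕ := A.orderEmbOfFin rfl with ha
  have key : ∀ {p q p' q' : Fin m}, (p:ℕ) ≤ p' → (q:ℕ) ≤ q' → (p:ℕ) + q < (p':ℕ) + q' →
      a p + a q < a p' + a q' := by
    intro p q p' q' hp hq hlt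
    rcases Nat.lt_or_ge (p:ℕ) p' with h | h
    · exact add_lt_add_of_lt_of_le (a.strictMono (Fin.lt_def.mpr h)) (a.monotone (Fin.le_def.mpr hq))
    · have : (q:ℕ) < q' := by omega
      exact add_lt_add_of_le_of_lt (a.monotone (Fin.le_def.mpr hp)) (a.strictMono (Fin.lt_def.mpr this))
  set c : Fin (2 * (m-1) + 1) → ℕ :=
    fun j => a ⟨(j:ℕ) ⊓ (m-1), by omega⟩ + a ⟨(j:ℕ) - (m-1), by have := j.2; omega⟩ with hc
  set d : Fin (2 * (m-1) + 1) → ℕ :=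
    fun j => a ⟨(j:ℕ)/2, by have := j.2; omega⟩ + a ⟨((j:ℕ)+1)/2, by have := j.2; omega⟩ with hd
  have hcmem : ∀ j, c j ∈ 2 • A := by
    intro j
    rw [two_nsmul]
    exact Finset.add_mem_add (A.orderEmbOfFin_mem rfl _) (A.orderEmbOfFin_mem rfl _)
  have hdmem : ∀ j, d j ∈ 2 • A := by
    intro j
    rw [two_nsmul]
    exact Finset.add_mem_add (A.orderEmbOfFin_mem rfl _) (A.orderEmbOfFin_mem rfl _)
  have hcmono : StrictMono c := by
    intro j j' hlt
    have hlt' : (j:ℕ) < (j':ℕ) := hlt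
    have hb := j'.2
    exact key (by simp; omega) (by simp; omega) (by simp; omega)
  have hdmono : StrictMono d := by
    intro j j' hlt
    have hlt' : (j:ℕ) < (j':ℕ) := hlt
    exact key (by simp; omega) (by simp; omega) (by simp; omega)
  have hceq := Finset.orderEmbOfFin_unique hcard hcmem hcmono
  have hdeq := Finset.orderEmbOfFin_unique hcard hdmem hdmono
  have hcd : ∀ (j : ℕ) (hj : j < 2 * (m-1) + 1),
      a ⟨j ⊓ (m-1), by omega⟩ + a ⟨j - (m-1), by omega⟩
        = a ⟨j/2, by omega⟩ + a ⟨(j+1)/2, by omega⟩ :=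
    fun j hj => congrFun (hceq.trans hdeq.symm) ⟨j, hj⟩
  have key2 : ∀ (j : ℕ) (hj : j ≤ m - 1),
      a ⟨j, by omega⟩ + a ⟨0, by omega⟩ = a ⟨j/2, by omega⟩ + a ⟨(j+1)/2, by omega⟩ := by
    intro j hj
    have h1 := hcd j (by omega)
    have e1 : (⟨j ⊓ (m-1), by omega⟩ : Fin m) = ⟨j, by omega⟩ := by ext; simp; omega
    have e2 : (⟨j - (m-1), by omega⟩ : Fin m) = ⟨0, by omega⟩ := by ext; simp; omega
    rw [e1, e2] at h1
    exact h1
  have ha0 : a ⟨0, by omega⟩ = 0 := by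
    have h1 : a ⟨0, by omega⟩ = A.min' ⟨0, h0⟩ := A.orderEmbOfFin_zero rfl (by omega)
    have h2 : A.min' ⟨0, h0⟩ ≤ 0 := A.min'_le 0 h0
    omega
  set δ : ℕ := a ⟨1, by omega⟩ with hδ
  have hδpos : 1 ≤ δ := by
    have h3 := a.strictMono (show (⟨0, by omega⟩ : Fin m) < ⟨1, by omega⟩ from by
      rw [Fin.lt_def]; norm_num)
    omega
  have main : ∀ (j : ℕ) (hj : j ≤ m - 1), a ⟨j, by omega⟩ = j * δ := by
    intro j
    induction j using Nat.strong_induction_on with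
    | _ j ih =>
      intro hj
      match j, hj with
      | 0, hj => simpa using ha0
      | 1, hj => simp [hδ]
      | (j+2), hj =>
        have hk2 := key2 (j+2) hj
        rw [ha0, ih ((j+2)/2) (by omega) (by omega), ih ((j+2+1)/2) (by omega) (by omega)] at hk2
        rw [← Nat.add_mul] at hk2
        have h4 : (j+2)/2 + (j+2+1)/2 = j+2 := by omega
        rw [h4] at hk2
        omega
  refine ⟨δ, hδpos, ?_⟩
  ext x
  simp only [Finset.mem_image, Finset.mem_range]
  constructor
  · intro hx
    have : x ∈ Set.range a := by rw [Finset.range_orderEmbOfFin]; exact hx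
    obtain ⟨i, rfl⟩ := this
    exact ⟨i, i.2, by rw [← main i (by have := i.2; omega)]⟩
  · rintro ⟨j, hjm, rfl⟩
    rw [← main j (by omega)]
    exact A.orderEmbOfFin_mem rfl _

lemma range_add_range (r s : ℕ) : range (r+1) + range (s+1) = range (r+s+1) := by
  ext x
  simp only [Finset.mem_add, Finset.mem_range]
  constructor
  · rintro ⟨y, hy, z, hz, rfl⟩; omega
  · intro hx
    rcases Nat.lt_or_ge x (r+1) with h | h
    · exact ⟨x, h, 0, by omega, by omega⟩
    · exact ⟨r, by omega, x - r, by omega, by omega⟩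

lemma image_mul_add_finset (δ : ℕ) (s t : Finset ℕ) :
    s.image (· * δ) + t.image (· * δ) = (s + t).image (· * δ) := by
  ext x
  simp only [Finset.mem_add, Finset.mem_image]
  constructor
  · rintro ⟨y, ⟨u, hu, rfl⟩, z, ⟨v, hv, rfl⟩, rfl⟩
    exact ⟨u + v, ⟨u, hu, v, hv, rfl⟩, by ring⟩
  · rintro ⟨w, ⟨u, hu, v, hv, rfl⟩, rfl⟩
    exact ⟨u * δ, ⟨u, hu, rfl⟩, v * δ, ⟨v, hv, rfl⟩, by ring⟩

lemma nsmul_range_image (δ r k : ℕ) :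
    k • ((range (r+1)).image (· * δ)) = (range (k*r+1)).image (· * δ) := by
  induction k with
  | zero => simp [zero_nsmul]; rfl
  | succ n ih =>
    rw [succ_nsmul, ih, image_mul_add_finset, range_add_range]
    congr 2
    ring


variable {K : Type*} [Field K]

lemma degree_eq_two (v : Fin 2 →₀ ℕ) : v.degree = v 0 + v 1 := by
  rw [Finsupp.degree, ← Fin.sum_univ_two (f := fun i => v i)]
  exact Finset.sum_subset (Finset.subset_univ _)
    (fun i _ hi => Finsupp.notMem_support_iff.mp hi)

lemma degree_mono' {v w : Fin 2 →₀ ℕ} (h : v ≤ w) : v.degree ≤ w.degree := by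
  rw [degree_eq_two, degree_eq_two]
  have h0 := Finsupp.le_def.mp h 0
  have h1 := Finsupp.le_def.mp h 1
  omega

lemma eq_of_le_of_degree_le {v w : Fin 2 →₀ ℕ} (h : v ≤ w) (hd : w.degree ≤ v.degree) :
    v = w := by
  rw [degree_eq_two, degree_eq_two] at hd
  have h0 := Finsupp.le_def.mp h 0
  have h1 := Finsupp.le_def.mp h 1
  ext i
  match i with
  | 0 => omega
  | 1 => omega

-- support degrees in a monomial ideal generated in degree D are ≥ D
lemma support_degree_ge {T : Finset (Fin 2 →₀ ℕ)} {D : ℕ}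
    (hdeg : ∀ v ∈ T, v 0 + v 1 = D) {q : MvPolynomial (Fin 2) K}
    (hq : q ∈ Ideal.span ((fun v => monomial v (1:K)) '' (T : Set (Fin 2 →₀ ℕ)))) :
    ∀ w ∈ q.support, D ≤ w.degree := by
  intro w hw
  obtain ⟨si, hsi, hle⟩ := mem_ideal_span_monomial_image.mp hq w hw
  calc D = si.degree := by rw [degree_eq_two]; exact (hdeg si hsi).symm
    _ ≤ w.degree := degree_mono' hle

lemma homogeneousComponent_mul_of_ge {D : ℕ} {p q : MvPolynomial (Fin 2) K}
    (hq : ∀ w ∈ q.support, D ≤ w.degree) :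
    homogeneousComponent D (p * q) = p.coeff 0 • homogeneousComponent D q := by
  ext w
  rw [smul_eq_C_mul, coeff_homogeneousComponent, coeff_C_mul, coeff_homogeneousComponent]
  split_ifs with h
  · rw [coeff_mul]
    refine Finset.sum_eq_single (0, w) ?_ ?_
    · rintro ⟨u, v⟩ hb hne
      have huv : u + v = w := Finset.HasAntidiagonal.mem_antidiagonal.mp hb
      by_cases hv : coeff v q = 0
      · simp [hv]
      · exfalso
        have hvs : v ∈ q.support := mem_support_iff.mpr hv
        have h1 : D ≤ v.degree := hq v hvs
        have h2 : v ≤ w := huv ▸ le_add_self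
        have h3 : w.degree ≤ v.degree := by rw [h]; exact h1
        have h4 : v = w := eq_of_le_of_degree_le h2 h3
        apply hne
        have : u = 0 := by
          have := huv
          rw [h4] at this
          have h5 : u + w = 0 + w := by rw [this, zero_add]
          exact add_right_cancel h5
        rw [this, h4]
    · intro h0
      exact absurd (Finset.HasAntidiagonal.mem_antidiagonal.mpr (zero_add w)) h0
  · simp

lemma homogeneousComponent_monomial_self {D : ℕ} {v : Fin 2 →₀ ℕ} (hv : v.degree = D) :
    homogeneousComponent D (monomial v (1:K)) = monomial v (1:K) := by
  ext w
  rw [coeff_homogeneousComponent, coeff_monomial]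
  split_ifs with h1 h2 <;> simp_all

lemma mu_spanMon (T : Finset (Fin 2 →₀ ℕ)) (hT : T.Nonempty) (D : ℕ)
    (hdeg : ∀ v ∈ T, v 0 + v 1 = D) :
    mu (Ideal.span ((fun v => monomial v (1:K)) '' (T : Set (Fin 2 →₀ ℕ)))) = T.card := by
  set I := Ideal.span ((fun v => monomial v (1:K)) '' (T : Set (Fin 2 →₀ ℕ))) with hI
  have hinj : Set.InjOn (fun v => monomial v (1:K)) (T : Set (Fin 2 →₀ ℕ)) :=
    fun u _ v _ h => monomial_left_injective one_ne_zero h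
  have hle : mu I ≤ T.card := by
    apply Nat.sInf_le
    exact ⟨T.image (fun v => monomial v (1:K)),
      Finset.card_image_of_injOn hinj, by rw [Finset.coe_image]⟩
  have hge : ∀ c ∈ {m : ℕ | ∃ s : Finset (MvPolynomial (Fin 2) K),
      s.card = m ∧ Ideal.span (s : Set _) = I}, T.card ≤ c := by
    rintro c ⟨s, rfl, hspan⟩
    set W := Submodule.span K ((s.image (homogeneousComponent D) : Finset _) :
      Set (MvPolynomial (Fin 2) K)) with hW
    have hmemW : ∀ v ∈ T, monomial v (1:K) ∈ W := by
      intro v hv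
      have hmem : monomial v (1:K) ∈ Submodule.span (MvPolynomial (Fin 2) K) (↑s : Set _) := by
        rw [show Submodule.span (MvPolynomial (Fin 2) K) (↑s : Set _) = I from hspan]
        exact Ideal.subset_span ⟨v, hv, rfl⟩
      obtain ⟨f, -, hf⟩ := Submodule.mem_span_finset.mp hmem
      have hdegv : v.degree = D := by rw [degree_eq_two]; exact hdeg v hv
      have hkey : monomial v (1:K)
          = ∑ i ∈ s, (f i).coeff 0 • homogeneousComponent D i := by
        conv_lhs => rw [← homogeneousComponent_monomial_self hdegv, ← hf]
        rw [map_sum]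
        refine Finset.sum_congr rfl (fun i hi => ?_)
        rw [smul_eq_mul]
        exact homogeneousComponent_mul_of_ge (support_degree_ge hdeg
          (by rw [← hI, ← hspan]; exact Ideal.subset_span hi))
      rw [hkey]
      exact Submodule.sum_mem _ (fun i hi => Submodule.smul_mem _ _
        (Submodule.subset_span (Finset.mem_coe.mpr (Finset.mem_image_of_mem _ hi))))
    -- linear independence of the monomials
    have hli : LinearIndependent K
        (fun x : ((T.image fun v => monomial v (1:K)) : Set (MvPolynomial (Fin 2) K)) =>
          (x : MvPolynomial (Fin 2) K)) := by
      have hb := (basisMonomials (Fin 2) K).linearIndependent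
      rw [coe_basisMonomials] at hb
      have h1 := (hb.comp (Subtype.val : {x // x ∈ T} → (Fin 2 →₀ ℕ))
        Subtype.val_injective) |> fun h => (linearIndepOn_id_range_iff h.injective).mpr h
      have h2 : Set.range (fun v : {x // x ∈ T} => monomial (v : Fin 2 →₀ ℕ) (1:K))
          = ↑(T.image fun v => monomial v (1:K)) := by
        rw [Finset.coe_image, Set.image_eq_range]
        rfl
      rw [← h2]
      exact h1
    have hV : Module.finrank K (Submodule.span K
        (↑(T.image fun v => monomial v (1:K)) : Set (MvPolynomial (Fin 2) K))) = T.card := by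
      rw [finrank_span_finset_eq_card hli, Finset.card_image_of_injOn hinj]
    have hVle : Submodule.span K (↑(T.image fun v => monomial v (1:K)) :
        Set (MvPolynomial (Fin 2) K)) ≤ W := by
      rw [Finset.coe_image]
      refine Submodule.span_le.mpr ?_
      rintro x ⟨v, hv, rfl⟩
      exact hmemW v hv
    have hfin : Module.finrank K W ≤ s.card := by
      calc Module.finrank K W ≤ (s.image (homogeneousComponent D)).card :=
            finrank_span_finset_le_card _
        _ ≤ s.card := Finset.card_image_le
    calc T.card = _ := hV.symm
      _ ≤ Module.finrank K W := Submodule.finrank_mono hVle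
      _ ≤ s.card := hfin
  refine le_antisymm hle (le_csInf ?_ hge)
  exact ⟨T.card, T.image (fun v => monomial v (1:K)),
    Finset.card_image_of_injOn hinj, by rw [Finset.coe_image]⟩

lemma spanMon_mul (T U : Finset (Fin 2 →₀ ℕ)) :
    Ideal.span ((fun v => monomial v (1:K)) '' (T : Set (Fin 2 →₀ ℕ))) *
      Ideal.span ((fun v => monomial v (1:K)) '' (U : Set (Fin 2 →₀ ℕ)))
    = Ideal.span ((fun v => monomial v (1:K)) '' ((T + U : Finset (Fin 2 →₀ ℕ)) : Set _)) := by
  rw [Ideal.span_mul_span']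
  congr 1
  rw [Finset.coe_add]
  ext x
  simp only [Set.mem_mul, Set.mem_image, Set.mem_add]
  constructor
  · rintro ⟨y, ⟨u, hu, rfl⟩, z, ⟨v, hv, rfl⟩, rfl⟩
    exact ⟨u + v, ⟨u, hu, v, hv, rfl⟩, by rw [monomial_mul, one_mul]⟩
  · rintro ⟨w, ⟨u, hu, v, hv, rfl⟩, rfl⟩
    exact ⟨monomial u 1, ⟨u, hu, rfl⟩, monomial v 1, ⟨v, hv, rfl⟩, by rw [monomial_mul, one_mul]⟩

lemma spanMon_pow (T : Finset (Fin 2 →₀ ℕ)) (k : ℕ) :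
    (Ideal.span ((fun v => monomial v (1:K)) '' (T : Set (Fin 2 →₀ ℕ)))) ^ k
    = Ideal.span ((fun v => monomial v (1:K)) '' ((k • T : Finset (Fin 2 →₀ ℕ)) : Set _)) := by
  induction k with
  | zero =>
    rw [pow_zero, zero_nsmul]
    have h1 : ((0 : Finset (Fin 2 →₀ ℕ)) : Set (Fin 2 →₀ ℕ)) = {0} := by
      rw [Finset.coe_zero]; rfl
    rw [h1, Set.image_singleton, monomial_zero', C_1, Ideal.span_singleton_one, Ideal.one_eq_top]
  | succ n ih =>
    rw [pow_succ, ih, spanMon_mul, succ_nsmul]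

/-- the exponent vector (a, d - a) -/
noncomputable def emb (d a : ℕ) : Fin 2 →₀ ℕ := Finsupp.single 0 a + Finsupp.single 1 (d - a)

lemma emb_apply0 (d a : ℕ) : emb d a 0 = a := by
  simp [emb, Finsupp.single_apply]

lemma emb_apply1 (d a : ℕ) : emb d a 1 = d - a := by
  simp [emb, Finsupp.single_apply]

lemma emb_inj (d : ℕ) : Function.Injective (emb d) := by
  intro a b h
  have := congrArg (fun v => v 0) h
  simpa [emb_apply0] using this

lemma emb_add {d e a b : ℕ} (ha : a ≤ d) (hb : b ≤ e) :
    emb d a + emb e b = emb (d + e) (a + b) := by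
  ext i
  match i with
  | 0 => simp [Finsupp.add_apply, emb_apply0]
  | 1 => simp only [Finsupp.add_apply, emb_apply1]; omega

noncomputable def TF (d : ℕ) (A : Finset ℕ) : Finset (Fin 2 →₀ ℕ) := A.image (emb d)

lemma TF_card (d : ℕ) (A : Finset ℕ) : (TF d A).card = A.card :=
  Finset.card_image_of_injective _ (emb_inj d)

lemma TF_nonempty {A : Finset ℕ} (hA : A.Nonempty) (d : ℕ) : (TF d A).Nonempty :=
  hA.image _

lemma TF_deg {d : ℕ} {A : Finset ℕ} (hA : ∀ a ∈ A, a ≤ d) :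
    ∀ v ∈ TF d A, v 0 + v 1 = d := by
  intro v hv
  obtain ⟨a, ha, rfl⟩ := Finset.mem_image.mp hv
  rw [emb_apply0, emb_apply1]
  have := hA a ha
  omega

lemma TF_add {d e : ℕ} {A B : Finset ℕ} (hA : ∀ a ∈ A, a ≤ d) (hB : ∀ b ∈ B, b ≤ e) :
    TF d A + TF e B = TF (d + e) (A + B) := by
  ext x
  simp only [TF, Finset.mem_add, Finset.mem_image]
  constructor
  · rintro ⟨y, ⟨a, ha, rfl⟩, z, ⟨b, hb, rfl⟩, rfl⟩
    exact ⟨a + b, ⟨a, ha, b, hb, rfl⟩, (emb_add (hA a ha) (hB b hb)).symm ▸ rfl⟩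
  · rintro ⟨w, ⟨a, ha, b, hb, rfl⟩, rfl⟩
    exact ⟨emb d a, ⟨a, ha, rfl⟩, emb e b, ⟨b, hb, rfl⟩, emb_add (hA a ha) (hB b hb)⟩

lemma nsmul_bound {A : Finset ℕ} {d : ℕ} (hA : ∀ a ∈ A, a ≤ d) (k : ℕ) :
    ∀ x ∈ k • A, x ≤ k * d := by
  induction k with
  | zero => intro x hx; simp [zero_nsmul] at hx; omega
  | succ n ih =>
    intro x hx
    rw [succ_nsmul] at hx
    obtain ⟨y, hy, z, hz, rfl⟩ := Finset.mem_add.mp hx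
    have := ih y hy
    have := hA z hz
    have : (n+1)*d = n*d+d := by ring
    omega

lemma TF_nsmul {d : ℕ} {A : Finset ℕ} (hA : ∀ a ∈ A, a ≤ d) (k : ℕ) :
    k • TF d A = TF (k * d) (k • A) := by
  induction k with
  | zero =>
    rw [zero_nsmul, zero_nsmul, Nat.zero_mul]
    ext x
    simp only [TF]
    constructor
    · intro hx
      rw [Finset.mem_zero] at hx
      subst hx
      refine Finset.mem_image.mpr ⟨0, by rw [Finset.mem_zero], ?_⟩
      ext i
      match i with
      | 0 => simp [emb_apply0]
      | 1 => simp [emb_apply1]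
    · intro hx
      obtain ⟨a, ha, rfl⟩ := Finset.mem_image.mp hx
      rw [Finset.mem_zero] at ha
      subst ha
      rw [Finset.mem_zero]
      ext i
      match i with
      | 0 => simp [emb_apply0]
      | 1 => simp [emb_apply1]
  | succ n ih =>
    rw [succ_nsmul, succ_nsmul, ih, TF_add (nsmul_bound hA n) hA]
    congr 1
    ring

lemma extract_struct (I : Ideal (MvPolynomial (Fin 2) K))
    (heq : IsEquigenMonomialIdeal I) (hht : HasHeightTwo I) :
    ∃ (d : ℕ) (A : Finset ℕ), 1 ≤ d ∧ 0 ∈ A ∧ d ∈ A ∧ (∀ a ∈ A, a ≤ d) ∧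
      I = Ideal.span ((fun v => monomial v (1:K)) '' (TF d A : Set (Fin 2 →₀ ℕ))) := by
  obtain ⟨d, S, hSne, hSdeg, hIspan⟩ := heq
  have hSdeg' : ∀ v ∈ S, v 0 + v 1 = d := by
    intro v hv
    have := hSdeg v hv
    rwa [Fin.sum_univ_two] at this
  have hSrep : ∀ v ∈ S, v = emb d (v 0) ∧ v 0 ≤ d := by
    intro v hv
    have hdv := hSdeg' v hv
    constructor
    · ext i
      match i with
      | 0 => rw [emb_apply0]
      | 1 => rw [emb_apply1]; omega
    · omega
  set A : Finset ℕ := (Finset.range (d+1)).filter (fun a => emb d a ∈ S) with hA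
  have hScoe : S = (TF d A : Set (Fin 2 →₀ ℕ)) := by
    ext v
    simp only [TF, Finset.coe_image, Set.mem_image, Finset.mem_coe, hA, Finset.mem_filter,
      Finset.mem_range]
    constructor
    · intro hv
      obtain ⟨hrep, hle⟩ := hSrep v hv
      exact ⟨v 0, ⟨by omega, by rw [← hrep]; exact hv⟩, hrep.symm⟩
    · rintro ⟨a, ⟨_, ha⟩, rfl⟩
      exact ha
  have hIT : I = Ideal.span ((fun v => monomial v (1:K)) '' (TF d A : Set (Fin 2 →₀ ℕ))) := by
    rw [hIspan, hScoe]
  have hbd : ∀ a ∈ A, a ≤ d := by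
    intro a ha
    rw [hA, Finset.mem_filter, Finset.mem_range] at ha
    omega
  -- d ∈ A from x-power, 0 ∈ A from y-power
  obtain ⟨hne, k, l, hk, hl, hxk, hyl⟩ := hht
  have hdA : d ∈ A := by
    rw [hIT] at hxk
    rw [X_pow_eq_monomial] at hxk
    have hsup := mem_ideal_span_monomial_image.mp hxk (Finsupp.single 0 k) (by
      rw [support_monomial, if_neg one_ne_zero]; exact Finset.mem_singleton_self _)
    obtain ⟨si, hsi, hle⟩ := hsup
    obtain ⟨a, ha, rfl⟩ := Finset.mem_image.mp hsi
    have h1 : emb d a 1 ≤ Finsupp.single (0 : Fin 2) k 1 := Finsupp.le_def.mp hle 1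
    rw [emb_apply1] at h1
    simp [Finsupp.single_apply] at h1
    have h2 := hbd a ha
    have h3 : a = d := by omega
    rwa [← h3]
  have h0A : 0 ∈ A := by
    rw [hIT] at hyl
    rw [X_pow_eq_monomial] at hyl
    have hsup := mem_ideal_span_monomial_image.mp hyl (Finsupp.single 1 l) (by
      rw [support_monomial, if_neg one_ne_zero]; exact Finset.mem_singleton_self _)
    obtain ⟨si, hsi, hle⟩ := hsup
    obtain ⟨a, ha, rfl⟩ := Finset.mem_image.mp hsi
    have h1 : emb d a 0 ≤ Finsupp.single (1 : Fin 2) l 0 := Finsupp.le_def.mp hle 0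
    rw [emb_apply0] at h1
    simp [Finsupp.single_apply] at h1
    rw [← h1]; exact ha
  have hd1 : 1 ≤ d := by
    by_contra hd
    have hd0 : d = 0 := by omega
    apply hne
    rw [Ideal.eq_top_iff_one, hIT]
    apply Ideal.subset_span
    refine ⟨emb d 0, ?_, ?_⟩
    · exact Finset.mem_coe.mpr (Finset.mem_image_of_mem _ h0A)
    · have : emb d 0 = 0 := by
        ext i
        match i with
        | 0 => rw [emb_apply0, Finsupp.coe_zero, Pi.zero_apply]
        | 1 => rw [emb_apply1, Finsupp.coe_zero, Pi.zero_apply]; omega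
      rw [this]
      show (monomial (0 : Fin 2 →₀ ℕ)) (1:K) = 1
      rw [monomial_zero', C_1]
  exact ⟨d, A, hd1, h0A, hdA, hbd, hIT⟩

lemma pair_eq_range_image (a : ℕ) : ({0, a} : Finset ℕ) = (Finset.range 2).image (· * a) := by
  ext x
  simp only [Finset.mem_insert, Finset.mem_singleton, Finset.mem_image, Finset.mem_range]
  constructor
  · rintro (rfl | rfl)
    · exact ⟨0, by omega, by omega⟩
    · exact ⟨1, by omega, by omega⟩
  · rintro ⟨j, hj, rfl⟩
    interval_cases j
    · left; omega
    · right; omega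

lemma span_pair_eq_TF (a : ℕ) :
    (Ideal.span {X 0 ^ a, X 1 ^ a} : Ideal (MvPolynomial (Fin 2) K))
      = Ideal.span ((fun v => monomial v (1:K)) '' (TF a ({0, a} : Finset ℕ) : Set _)) := by
  congr 1
  have h1 : TF a ({0, a} : Finset ℕ) = {emb a 0, emb a a} := by
    rw [TF, Finset.image_insert, Finset.image_singleton]
  rw [h1, Finset.coe_insert, Finset.coe_singleton, Set.image_pair]
  have e0 : emb a 0 = Finsupp.single 1 a := by
    ext i
    match i with
    | 0 => rw [emb_apply0]; simp [Finsupp.single_apply]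
    | 1 => rw [emb_apply1]; simp [Finsupp.single_apply]
  have ea : emb a a = Finsupp.single 0 a := by
    ext i
    match i with
    | 0 => rw [emb_apply0]; simp [Finsupp.single_apply]
    | 1 => rw [emb_apply1]; simp [Finsupp.single_apply]
  rw [e0, ea, ← X_pow_eq_monomial, ← X_pow_eq_monomial, Set.pair_comm]

lemma mu_pair_pow (a : ℕ) (ha : 0 < a) (j : ℕ) :
    mu ((Ideal.span {X 0 ^ a, X 1 ^ a} : Ideal (MvPolynomial (Fin 2) K)) ^ j) = j + 1 := by
  have hbd : ∀ x ∈ ({0, a} : Finset ℕ), x ≤ a := by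
    intro x hx
    rcases Finset.mem_insert.mp hx with rfl | hx
    · omega
    · rw [Finset.mem_singleton] at hx; omega
  rw [span_pair_eq_TF, spanMon_pow, TF_nsmul hbd,
    mu_spanMon _ (TF_nonempty (nsmul_nonempty ⟨0, Finset.mem_insert_self _ _⟩ j) _) (j * a)
      (TF_deg (nsmul_bound hbd j)), TF_card, pair_eq_range_image,
    show (Finset.range 2) = Finset.range (1+1) from rfl, nsmul_range_image]
  rw [Finset.card_image_of_injective _ (fun x y h => Nat.eq_of_mul_eq_mul_right ha h),
    Finset.card_range]
  omega

end Lemmas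

/-- Corollary 3.4: for an equigenerated monomial ideal `I ⊂ K[x,y]` of height 2 with
`μ(I) = m`: (a) `μ(I^k) ≥ k(m-1)+1` for all `k ≥ 1`; (b) the following are equivalent:
`μ(I^k) = k(m-1)+1` for some `k ≥ 2`; `μ(I^k) = k(m-1)+1` for all `k ≥ 2`;
`I = (xᵃ,yᵃ)^r` for some positive integers `a`, `r`. -/
theorem numGen_powers_eq_iff {K : Type*} [Field K]
    (I : Ideal (MvPolynomial (Fin 2) K)) (m : ℕ)
    (heq : IsEquigenMonomialIdeal I) (hht : HasHeightTwo I) (hm : mu I = m) :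
    (∀ k : ℕ, 1 ≤ k → k * (m - 1) + 1 ≤ mu (I ^ k)) ∧
    ((∃ k : ℕ, 2 ≤ k ∧ mu (I ^ k) = k * (m - 1) + 1) ↔
      (∀ k : ℕ, 2 ≤ k → mu (I ^ k) = k * (m - 1) + 1)) ∧
    ((∃ k : ℕ, 2 ≤ k ∧ mu (I ^ k) = k * (m - 1) + 1) ↔
      (∃ a r : ℕ, 0 < a ∧ 0 < r ∧
        I = (Ideal.span {X 0 ^ a, X 1 ^ a} : Ideal (MvPolynomial (Fin 2) K)) ^ r)) := by
  obtain ⟨d, A, hd1, h0A, hdA, hbd, hIT⟩ := extract_struct I heq hht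
  have hAne : A.Nonempty := ⟨0, h0A⟩
  have hIk : ∀ k : ℕ, I ^ k
      = Ideal.span ((fun v => monomial v (1:K)) '' (TF (k*d) (k • A) : Set (Fin 2 →₀ ℕ))) := by
    intro k
    rw [hIT, spanMon_pow, TF_nsmul hbd]
  have hmuk : ∀ k : ℕ, mu (I ^ k) = (k • A).card := by
    intro k
    rw [hIk k, mu_spanMon _ (TF_nonempty (nsmul_nonempty hAne k) _) (k*d)
      (TF_deg (nsmul_bound hbd k)), TF_card]
  have hmA : A.card = m := by
    have h1 := hmuk 1
    rw [pow_one, one_nsmul] at h1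
    rw [← hm, h1]
  have hm2 : 2 ≤ m := by
    rw [← hmA]
    exact Finset.one_lt_card.mpr ⟨0, h0A, d, hdA, by omega⟩
  have parta : ∀ k : ℕ, 1 ≤ k → k * (m - 1) + 1 ≤ mu (I ^ k) := by
    intro k _
    rw [hmuk k, ← hmA]
    exact nsmul_card_lower A hAne k
  have himp1 : (∃ k : ℕ, 2 ≤ k ∧ mu (I ^ k) = k * (m - 1) + 1) →
      (∃ a r : ℕ, 0 < a ∧ 0 < r ∧
        I = (Ideal.span {X 0 ^ a, X 1 ^ a} : Ideal (MvPolynomial (Fin 2) K)) ^ r) := by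
    rintro ⟨k, hk2, hkeq⟩
    rw [hmuk k, ← hmA] at hkeq
    have hklow := nsmul_card_lower A hAne k
    have h2low := nsmul_card_lower A hAne 2
    have hiter := nsmul_card_ge_two_nsmul A hAne k hk2
    have e1 : k * (A.card - 1) = (k-2) * (A.card - 1) + 2 * (A.card - 1) := by
      have h : k - 2 + 2 = k := by omega
      calc k * (A.card-1) = ((k-2)+2) * (A.card-1) := by rw [h]
        _ = _ := by ring
    have h2A : (2 • A).card = 2 * (A.card - 1) + 1 := by
      generalize hu : (k-2) * (A.card - 1) = u at hiter e1
      generalize hw : k * (A.card - 1) = w at hkeq hklow e1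
      omega
    obtain ⟨δ, hδ1, hAeq⟩ := two_nsmul_eq_ap A h0A (by omega) h2A
    have hdval : d = (A.card - 1) * δ := by
      have hdmem : d ∈ (range A.card).image (· * δ) := by rw [← hAeq]; exact hdA
      obtain ⟨j, hj, hjd⟩ := Finset.mem_image.mp hdmem
      rw [Finset.mem_range] at hj
      have htop : (A.card - 1) * δ ∈ A := by
        have h4 : (A.card - 1) * δ ∈ (range A.card).image (· * δ) :=
          Finset.mem_image.mpr ⟨A.card - 1, Finset.mem_range.mpr (by omega), rfl⟩
        rwa [← hAeq] at h4
      have h1 := hbd _ htop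
      have h2 : j ≤ A.card - 1 := by omega
      have h3 : j * δ ≤ (A.card - 1) * δ := Nat.mul_le_mul_right δ h2
      omega
    refine ⟨δ, m - 1, by omega, by omega, ?_⟩
    rw [span_pair_eq_TF, spanMon_pow]
    have hpairbd : ∀ x ∈ ({0, δ} : Finset ℕ), x ≤ δ := by
      intro x hx
      rcases Finset.mem_insert.mp hx with rfl | hx
      · omega
      · rw [Finset.mem_singleton] at hx; omega
    rw [TF_nsmul hpairbd, pair_eq_range_image,
      show Finset.range 2 = Finset.range (1+1) from rfl, nsmul_range_image]
    have hr1 : (m-1) * 1 + 1 = A.card := by omega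
    have hr2 : (m-1) * δ = d := by
      rw [show m - 1 = A.card - 1 from by omega, ← hdval]
    rw [hr1, hr2, ← hAeq]
    exact hIT
  have himp2 : (∃ a r : ℕ, 0 < a ∧ 0 < r ∧
        I = (Ideal.span {X 0 ^ a, X 1 ^ a} : Ideal (MvPolynomial (Fin 2) K)) ^ r) →
      ∀ k : ℕ, 2 ≤ k → mu (I ^ k) = k * (m - 1) + 1 := by
    rintro ⟨a, r, ha, _, hIeq⟩ k _
    have hmr : m = r + 1 := by
      rw [← hm, hIeq, mu_pair_pow a ha r]
    have hIk' : I ^ k = (Ideal.span {X 0 ^ a, X 1 ^ a} : Ideal (MvPolynomial (Fin 2) K)) ^ (r * k) := by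
      rw [hIeq, ← pow_mul]
    rw [hIk', mu_pair_pow a ha (r*k), hmr]
    rw [show r + 1 - 1 = r from by omega, Nat.mul_comm r k]
  refine ⟨parta, ?_, ?_⟩
  · exact ⟨fun hex => himp2 (himp1 hex), fun hall => ⟨2, le_refl 2, hall 2 (le_refl 2)⟩⟩
  · exact ⟨himp1, fun hex => ⟨2, le_refl 2, himp2 hex 2 (le_refl 2)⟩⟩
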